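/- (Case α ≠ 0, β ≠ α².) Any solution of the Hamilton–Cartan system (i) q̇¹ = v¹, (ii) q̇² = v², (iii) v̇¹ = β(q¹−q²) − αv², (iv) αv¹ = β(q¹−q²) with α ≠ 0 and β ≠ α² satisfies v¹ = v² and hence the final equations of motion q̇¹ = q̇² = (β/α)(q¹ − q²). -/
import Mathlib


/-- (Case `α ≠ 0`, `β ≠ α²`.) Any solution of the Hamilton–Cartan system
(i) `q̇¹ = v¹`, (ii) `q̇² = v²`, (iii) `v̇¹ = β(q¹−q²) − αv²`,
(iv) `αv¹ = β(q¹−q²)` with `α ≠ 0` and `β ≠ α²` satisfies `v¹ = v²`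
and hence the final equations of motion `q̇¹ = q̇² = (β/α)(q¹ − q²)`. -/
theorem stmt8 (α β : ℝ) (hα : α ≠ 0) (hβ : β ≠ α ^ 2) (q1 q2 v1 v2 : ℝ → ℝ)
    (hq1 : Differentiable ℝ q1) (hq2 : Differentiable ℝ q2)
    (hv1 : Differentiable ℝ v1) (hv2 : Differentiable ℝ v2)
    (h1 : ∀ t, deriv q1 t = v1 t)
    (h2 : ∀ t, deriv q2 t = v2 t)
    (h3 : ∀ t, deriv v1 t = β * (q1 t - q2 t) - α * v2 t)
    (h4 : ∀ t, α * v1 t = β * (q1 t - q2 t)) :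
    (∀ t, v1 t = v2 t) ∧
      (∀ t, deriv q1 t = (β / α) * (q1 t - q2 t)) ∧
      (∀ t, deriv q2 t = (β / α) * (q1 t - q2 t)) := by
  have key : ∀ t, v1 t = v2 t := by
    intro t
    have hL : HasDerivAt (fun s => α * v1 s) (α * deriv v1 t) t :=
      ((hv1 t).hasDerivAt).const_mul α
    have hR : HasDerivAt (fun s => β * (q1 s - q2 s))
        (β * (deriv q1 t - deriv q2 t)) t :=
      (((hq1 t).hasDerivAt).sub ((hq2 t).hasDerivAt)).const_mul β
    have hfun : (fun s => α * v1 s) = (fun s => β * (q1 s - q2 s)) := funext h4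
    rw [hfun] at hL
    have heq : α * deriv v1 t = β * (deriv q1 t - deriv q2 t) :=
      hL.unique hR
    rw [h1 t, h2 t, h3 t] at heq
    have h4t := h4 t
    have hd : (β - α ^ 2) * (v1 t - v2 t) = 0 := by linear_combination -heq - α * h4t
    have : β - α ^ 2 ≠ 0 := sub_ne_zero.mpr hβ
    have := mul_eq_zero.mp hd
    rcases this with h | h
    · exact absurd h ‹β - α ^ 2 ≠ 0›
    · linarith
  refine ⟨key, ?_, ?_⟩ <;> intro t
  · rw [h1 t]
    field_simp
    nlinarith [h4 t]
  · rw [h2 t, ← key t]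
    field_simp
    nlinarith [h4 t]
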